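/- Let (α_j) be a positive sequence with α_j → 0 and Σ_{j} α_j = ∞, and let ε > 0. Suppose |d_j − d| < ε/2 for all j ≥ j₀ and α_j < ε/2 for all j ≥ j₀. If the recursion x_{j+1} = x_j + α_j sgn(d_j − x_j) satisfies |x_{j₁} − d| < ε for some j₁ ≥ j₀, then |x_j − d| < ε for all j ≥ j₁. -/

import Mathlib

open Filter

/-- Sign function: 1 if positive, -1 if negative, 0 at zero. -/
noncomputable def sgn (z : ℝ) : ℝ := if 0 < z then 1 else if z < 0 then -1 else 0

theorem stmt_13 (α : ℕ → ℝ) (hαpos : ∀ j, 0 < α j) (hα0 : Tendsto α atTop (nhds 0))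
    (hαdiv : Tendsto (fun n => ∑ j ∈ Finset.range n, α j) atTop atTop)
    (d : ℕ → ℝ) (dlim : ℝ) (ε : ℝ) (hε : 0 < ε) (j₀ : ℕ)
    (hd : ∀ j ≥ j₀, |d j - dlim| < ε / 2) (hα : ∀ j ≥ j₀, α j < ε / 2)
    (x : ℕ → ℝ) (hx : ∀ j, x (j + 1) = x j + α j * sgn (d j - x j))
    (j₁ : ℕ) (hj₁ : j₁ ≥ j₀) (hstart : |x j₁ - dlim| < ε) :
    ∀ j ≥ j₁, |x j - dlim| < ε := by
  intro j hj
  induction j with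
  | zero =>
    have h0 : j₁ = 0 := Nat.le_zero.mp hj
    simpa [h0] using hstart
  | succ n ih =>
    rcases Nat.lt_or_ge n j₁ with h | h
    · have : j₁ = n + 1 := le_antisymm hj h
      simpa [this] using hstart
    · have ihn := ih h
      have hn0 : n ≥ j₀ := le_trans hj₁ h
      have hdn := hd n hn0
      have hαn := hα n hn0
      have hαp := hαpos n
      rw [hx n]
      rcases lt_trichotomy (x n) (d n) with hc | hc | hc
      · have hs : sgn (d n - x n) = 1 := by simp [sgn, sub_pos.mpr hc]
        rw [hs]
        rw [abs_lt] at ihn hdn ⊢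
        constructor <;> nlinarith
      · simp only [hc, sub_self, sgn, lt_irrefl, if_false, mul_zero, add_zero]
        rw [abs_lt] at hdn ⊢
        constructor <;> linarith
      · have hs : sgn (d n - x n) = -1 := by
          have h1 : d n - x n < 0 := sub_neg.mpr hc
          simp [sgn, h1, not_lt.mpr h1.le]
        rw [hs]
        rw [abs_lt] at ihn hdn ⊢
        constructor <;> nlinarith
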